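/- Let φ = (1+√5)/2 and S' = (1/√(2+φ))·[[1, e^{-4πi/5}·φ],[e^{4πi/5}·φ, -1]]. Then S' is unitary, (S')² = I, but no unit scalar multiple of S' normalizes the Pauli group P₁ = ⟨X,Y,Z⟩ ⊆ U(2); i.e. S' is not a Clifford operator even up to global phase. -/

import Mathlib

open Matrix

abbrev Mat2 := Matrix (Fin 2) (Fin 2) ℂ

def Xm : Mat2 := !![0, 1; 1, 0]
def Ym : Mat2 := !![0, -Complex.I; Complex.I, 0]
def Zm : Mat2 := !![1, 0; 0, -1]

lemma Xm_mem : Xm ∈ Matrix.unitaryGroup (Fin 2) ℂ := by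
  rw [Matrix.mem_unitaryGroup_iff]
  ext i j
  fin_cases i <;> fin_cases j <;>
    simp [Xm, Matrix.mul_apply, Fin.sum_univ_two, Matrix.star_apply, Matrix.one_apply]

lemma Ym_mem : Ym ∈ Matrix.unitaryGroup (Fin 2) ℂ := by
  rw [Matrix.mem_unitaryGroup_iff]
  ext i j
  fin_cases i <;> fin_cases j <;>
    simp [Ym, Matrix.mul_apply, Fin.sum_univ_two, Matrix.star_apply, Matrix.one_apply,
      Complex.ext_iff]

lemma Zm_mem : Zm ∈ Matrix.unitaryGroup (Fin 2) ℂ := by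
  rw [Matrix.mem_unitaryGroup_iff]
  ext i j
  fin_cases i <;> fin_cases j <;>
    simp [Zm, Matrix.mul_apply, Fin.sum_univ_two, Matrix.star_apply, Matrix.one_apply]

def Xu : Matrix.unitaryGroup (Fin 2) ℂ := ⟨Xm, Xm_mem⟩
def Yu : Matrix.unitaryGroup (Fin 2) ℂ := ⟨Ym, Ym_mem⟩
def Zu : Matrix.unitaryGroup (Fin 2) ℂ := ⟨Zm, Zm_mem⟩

/-- The one-qubit Pauli group `P₁ = ⟨X, Y, Z⟩ ⊆ U(2)`. -/
def PauliGroup : Subgroup (Matrix.unitaryGroup (Fin 2) ℂ) := Subgroup.closure {Xu, Yu, Zu}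

/-- The normalizer of the Pauli group in `U(2)`. -/
def PauliNormalizer : Subgroup (Matrix.unitaryGroup (Fin 2) ℂ) := Subgroup.normalizer (PauliGroup : Set (Matrix.unitaryGroup (Fin 2) ℂ))

/-- The subgroup of unit scalar multiples of the identity in `U(2)`. -/
def ScalarU : Subgroup (Matrix.unitaryGroup (Fin 2) ℂ) where
  carrier := {U | ∃ c : ℂ, (U : Mat2) = c • (1 : Mat2)}
  one_mem' := ⟨1, by simp⟩
  mul_mem' := by
    rintro a b ⟨c, hc⟩ ⟨d, hd⟩
    exact ⟨c * d, by
      have : ((a * b : Matrix.unitaryGroup (Fin 2) ℂ) : Mat2) = (a : Mat2) * b := rfl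
      rw [this, hc, hd, smul_mul_smul_comm, one_mul]⟩
  inv_mem' := by
    rintro a ⟨c, hc⟩
    refine ⟨(starRingEnd ℂ) c, ?_⟩
    have : ((a⁻¹ : Matrix.unitaryGroup (Fin 2) ℂ) : Mat2) = star (a : Mat2) := rfl
    rw [this, hc]
    simp [star_smul]

lemma ScalarU_conj_mem (u v : Matrix.unitaryGroup (Fin 2) ℂ) (hv : v ∈ ScalarU) :
    u * v * u⁻¹ ∈ ScalarU := by
  obtain ⟨c, hc⟩ := hv
  refine ⟨c, ?_⟩
  have h1 : ((u * v * u⁻¹ : Matrix.unitaryGroup (Fin 2) ℂ) : Mat2)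
      = (u : Mat2) * (v : Mat2) * ((u⁻¹ : Matrix.unitaryGroup (Fin 2) ℂ) : Mat2) := rfl
  have h2 : (u : Mat2) * ((u⁻¹ : Matrix.unitaryGroup (Fin 2) ℂ) : Mat2) = 1 :=
    congrArg (fun w : Matrix.unitaryGroup (Fin 2) ℂ => (w : Mat2)) (mul_inv_cancel u)
  rw [h1, hc, mul_smul_comm, mul_one, smul_mul_assoc, h2]

instance : (ScalarU.subgroupOf PauliNormalizer).Normal := by
  constructor
  intro n hmem g
  rw [Subgroup.mem_subgroupOf] at hmem ⊢
  exact ScalarU_conj_mem (g : Matrix.unitaryGroup (Fin 2) ℂ) n hmem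

/-- The one-qubit Clifford group: the normalizer of the Pauli group modulo global phases. -/
def Cliff1 := PauliNormalizer ⧸ (ScalarU.subgroupOf PauliNormalizer)

noncomputable instance : Group Cliff1 := QuotientGroup.Quotient.group _

/-- The Pauli group `P₁` as a set of matrices. -/
def PauliSet : Set Mat2 :=
  (fun U : Matrix.unitaryGroup (Fin 2) ℂ => (U : Mat2)) '' (PauliGroup : Set _)

/-- A matrix is a Clifford operator if it is unitary and conjugation by it maps the
Pauli group `P₁` onto itself. -/
def IsCliffordMat (M : Mat2) : Prop :=
  M ∈ Matrix.unitaryGroup (Fin 2) ℂ ∧ (fun p => M * p * star M) '' PauliSet = PauliSet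

noncomputable def goldenRatio' : ℝ := (1 + Real.sqrt 5) / 2

/-- The Fibonacci S-matrix conjugated into the basis where T is scalar. -/
noncomputable def FibS' : Mat2 :=
  (1 / (Real.sqrt (2 + goldenRatio') : ℂ)) •
    !![1, Complex.exp (-(4 * Real.pi * Complex.I) / 5) * (goldenRatio' : ℂ);
       Complex.exp (4 * Real.pi * Complex.I / 5) * (goldenRatio' : ℂ), -1]

/-- Matrices that are either anti-diagonal or diagonal with fourth-root-of-unity
nonzero entries; every Pauli group element has this form. -/
def PauliLike (U : Mat2) : Prop :=
  (U 0 0 = 0 ∧ U 1 1 = 0 ∧ (U 0 1)^4 = 1 ∧ (U 1 0)^4 = 1) ∨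
  (U 0 1 = 0 ∧ U 1 0 = 0 ∧ (U 0 0)^4 = 1 ∧ (U 1 1)^4 = 1)

lemma pauliLike_mul {A B : Mat2} (hA : PauliLike A) (hB : PauliLike B) :
    PauliLike (A * B) := by
  have e : ∀ i j, (A * B) i j = A i 0 * B 0 j + A i 1 * B 1 j := fun i j => by
    rw [Matrix.mul_apply, Fin.sum_univ_two]
  rcases hA with ⟨h1,h2,h3,h4⟩|⟨h1,h2,h3,h4⟩ <;>
    rcases hB with ⟨g1,g2,g3,g4⟩|⟨g1,g2,g3,g4⟩
  · right; simp [e, h1, h2, g1, g2, mul_pow, h3, h4, g3, g4]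
  · left; simp [e, h1, h2, g1, g2, mul_pow, h3, h4, g3, g4]
  · left; simp [e, h1, h2, g1, g2, mul_pow, h3, h4, g3, g4]
  · right; simp [e, h1, h2, g1, g2, mul_pow, h3, h4, g3, g4]

lemma pauliLike_star {A : Mat2} (hA : PauliLike A) : PauliLike (star A) := by
  have e : ∀ i j : Fin 2, (star A) i j = (starRingEnd ℂ) (A j i) := fun i j => rfl
  rcases hA with ⟨h1,h2,h3,h4⟩|⟨h1,h2,h3,h4⟩
  · left; simp [e, h1, h2, ← map_pow, h3, h4]
  · right; simp [e, h1, h2, ← map_pow, h3, h4]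

/-- The subgroup of `U(2)` consisting of Pauli-like matrices. -/
def KSub : Subgroup (Matrix.unitaryGroup (Fin 2) ℂ) where
  carrier := {U | PauliLike (U : Mat2)}
  one_mem' := by right; simp [Matrix.one_apply]
  mul_mem' := fun ha hb => pauliLike_mul ha hb
  inv_mem' := by
    rintro a ha
    have h : ((a⁻¹ : Matrix.unitaryGroup (Fin 2) ℂ) : Mat2) = star (a : Mat2) := rfl
    show PauliLike _
    rw [h]
    exact pauliLike_star ha

lemma pauliLike_Xm : PauliLike Xm := by left; norm_num [Xm]

lemma pauliLike_Ym : PauliLike Ym := by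
  left
  refine ⟨by norm_num [Ym], by norm_num [Ym], ?_, ?_⟩ <;> simp [Ym, pow_succ]

lemma pauliLike_Zm : PauliLike Zm := by
  right
  refine ⟨by norm_num [Zm], by norm_num [Zm], by norm_num [Zm], ?_⟩
  norm_num [Zm]

lemma pauli_le_KSub : PauliGroup ≤ KSub := by
  rw [PauliGroup]
  refine (Subgroup.closure_le _).2 ?_
  rintro x hx
  simp only [Set.mem_insert_iff, Set.mem_singleton_iff] at hx
  rcases hx with rfl | rfl | rfl
  · exact pauliLike_Xm
  · exact pauliLike_Ym
  · exact pauliLike_Zm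

set_option maxHeartbeats 1000000 in
/-- The matrix `S' = (1/√(2+φ))·[[1, e^{-4πi/5}φ],[e^{4πi/5}φ, -1]]` is
unitary and squares to the identity, but no unit scalar multiple of it normalizes the
Pauli group `P₁ = ⟨X,Y,Z⟩ ⊆ U(2)`; i.e. `S'` is not a Clifford operator even up to a
global phase. -/
theorem conjugated_fibonacci_S_not_clifford :
    FibS' ∈ Matrix.unitaryGroup (Fin 2) ℂ ∧ FibS' ^ 2 = 1 ∧
    ¬ ∃ mu : ℂ, ‖mu‖ = 1 ∧ IsCliffordMat (mu • FibS') := by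
  have hpi := Real.pi_pos
  have hE : Complex.exp (4 * Real.pi * Complex.I / 5)
      = (Real.cos (4 * Real.pi / 5) : ℂ) + (Real.sin (4 * Real.pi / 5) : ℂ) * Complex.I := by
    rw [show (4 * (Real.pi:ℂ) * Complex.I / 5) = ((4 * Real.pi / 5 : ℝ) : ℂ) * Complex.I by
      push_cast; ring, Complex.exp_mul_I]
    push_cast [Complex.ofReal_cos, Complex.ofReal_sin]; ring
  have hF : Complex.exp (-(4 * Real.pi * Complex.I) / 5)
      = (Real.cos (4 * Real.pi / 5) : ℂ) - (Real.sin (4 * Real.pi / 5) : ℂ) * Complex.I := by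
    rw [show (-(4 * (Real.pi:ℂ) * Complex.I) / 5) = ((-(4 * Real.pi / 5) : ℝ) : ℂ) * Complex.I by
      push_cast; ring, Complex.exp_mul_I]
    push_cast [Complex.ofReal_cos, Complex.ofReal_sin]
    rw [Complex.cos_neg, Complex.sin_neg]; ring
  set c := Real.cos (4*Real.pi/5) with hc_def
  set s := Real.sin (4*Real.pi/5) with hs_def
  have hcneg : c < 0 := by
    rw [hc_def]
    apply Real.cos_neg_of_pi_div_two_lt_of_lt <;> nlinarith
  have hspos : 0 < s := by
    rw [hs_def]
    apply Real.sin_pos_of_pos_of_lt_pi <;> nlinarith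
  have hφpos : (0:ℝ) < goldenRatio' := by
    have := Real.sqrt_nonneg 5; unfold goldenRatio'; linarith
  have hφ2 : goldenRatio'^2 = goldenRatio' + 1 := by
    have h : Real.sqrt 5 ^ 2 = 5 := Real.sq_sqrt (by norm_num)
    unfold goldenRatio'; nlinarith [h]
  have hrpos : (0:ℝ) < Real.sqrt (2+goldenRatio') := Real.sqrt_pos.2 (by linarith)
  have hr2 : Real.sqrt (2+goldenRatio')^2 = 2 + goldenRatio' := Real.sq_sqrt (by linarith)
  have hsc : s^2 + c^2 = 1 := Real.sin_sq_add_cos_sq _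
  have hrne : Real.sqrt (2+goldenRatio') ≠ 0 := ne_of_gt hrpos
  have hscalar : (1 / ((Real.sqrt (2+goldenRatio'):ℝ):ℂ))
      = (((Real.sqrt (2+goldenRatio'))⁻¹ : ℝ):ℂ) := by push_cast; ring
  have hherm : star FibS' = FibS' := by
    ext i j
    fin_cases i <;> fin_cases j <;>
      simp [FibS', Matrix.star_apply, hE, hF, hscalar, Complex.ext_iff] <;> ring
  have hmul : FibS' * FibS' = 1 := by
    ext i j
    fin_cases i <;> fin_cases j <;>
      simp [FibS', Matrix.mul_apply, Fin.sum_univ_two, hE, hF, hscalar, Matrix.one_apply,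
        Complex.ext_iff] <;>
      field_simp
    all_goals exact ⟨by linarith [hr2, (show goldenRatio'^2*s^2 + goldenRatio'^2*c^2 = goldenRatio'+1 by
      linear_combination goldenRatio'^2 * hsc + hφ2)], by ring⟩
  have hunit : FibS' ∈ Matrix.unitaryGroup (Fin 2) ℂ := by
    rw [Matrix.mem_unitaryGroup_iff, hherm, hmul]
  refine ⟨hunit, by rw [pow_two, hmul], ?_⟩
  rintro ⟨mu, hmu, -, himg⟩
  -- the conjugate of X by mu • FibS' is FibS' * Xm * FibS'
  have hmuc : mu * star mu = 1 := by
    rw [Complex.star_def, Complex.mul_conj]; norm_cast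
    rw [Complex.normSq_eq_norm_sq, hmu]; norm_num
  have hconj : (mu • FibS') * Xm * star (mu • FibS') = FibS' * Xm * FibS' := by
    rw [star_smul, hherm, smul_mul_assoc, smul_mul_assoc, mul_smul_comm, smul_smul, hmuc,
      one_smul]
  have hXP : Xm ∈ PauliSet := ⟨Xu, Subgroup.subset_closure (Set.mem_insert _ _), rfl⟩
  have hNP : FibS' * Xm * FibS' ∈ PauliSet := by
    rw [← hconj, ← himg]
    exact Set.mem_image_of_mem _ hXP
  obtain ⟨U, hU, hUeq⟩ := hNP
  have hPL : PauliLike (FibS' * Xm * FibS') := by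
    rw [← hUeq]
    exact pauli_le_KSub hU
  -- but the conjugate has nonzero (0,0) and (0,1) entries
  have hN00 : (FibS' * Xm * FibS') 0 0
      = ((2*c*goldenRatio'*((Real.sqrt (2+goldenRatio'))⁻¹)^2 : ℝ) : ℂ) := by
    simp [FibS', Xm, Matrix.mul_apply, Fin.sum_univ_two, hE, hF, hscalar]
    push_cast
    ring
  have hN01 : (FibS' * Xm * FibS') 0 1
      = ((((c^2-s^2)*goldenRatio'^2-1)*((Real.sqrt (2+goldenRatio'))⁻¹)^2 : ℝ) : ℂ)
        + ((-(2*s*c*goldenRatio'^2)*((Real.sqrt (2+goldenRatio'))⁻¹)^2 : ℝ) : ℂ) * Complex.I := by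
    simp [FibS', Xm, Matrix.mul_apply, Fin.sum_univ_two, hE, hF, hscalar]
    push_cast
    linear_combination ((s:ℂ)^2 * (goldenRatio':ℂ)^2 *
      ((Real.sqrt (2+goldenRatio') : ℂ))⁻¹^2) * Complex.I_sq
  have ht : (0:ℝ) < ((Real.sqrt (2+goldenRatio'))⁻¹)^2 := by positivity
  have h00ne : (FibS' * Xm * FibS') 0 0 ≠ 0 := by
    rw [hN00]
    refine Complex.ofReal_ne_zero.2 (ne_of_lt ?_)
    exact mul_neg_of_neg_of_pos (mul_neg_of_neg_of_pos (by linarith) hφpos) ht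
  have h01ne : (FibS' * Xm * FibS') 0 1 ≠ 0 := by
    rw [hN01]
    intro h
    have him : -(2*s*c*goldenRatio'^2) * ((Real.sqrt (2+goldenRatio'))⁻¹)^2 = 0 := by
      simpa only [Complex.add_im, Complex.ofReal_im, Complex.mul_im, Complex.I_im,
        Complex.I_re, Complex.ofReal_re, Complex.zero_im, mul_zero, zero_add, mul_one,
        zero_mul, add_zero] using congrArg Complex.im h
    have hpos : (0:ℝ) < -(2*s*c*goldenRatio'^2)*((Real.sqrt (2+goldenRatio'))⁻¹)^2 := by
      have h2 : (0:ℝ) < -(2*s*c*goldenRatio'^2) := by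
        nlinarith [mul_pos (mul_pos hspos (neg_pos.2 hcneg)) (pow_pos hφpos 2)]
      exact mul_pos h2 ht
    linarith
  rcases hPL with ⟨h1, -, -, -⟩ | ⟨h1, -, -, -⟩
  · exact h00ne h1
  · exact h01ne h1
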